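/- Under the hypotheses of the previous lemma with constant step $\alpha = (1-\eta)/L$, if the iterates $\{x_k\}$ of the stochastic proximal gradient method satisfy the condition $\alpha\mathbb{E}_k[(\nabla f(x_k) - g_k)^T(x_{k+1} - x_k)] \le \frac{\eta}{2}\mathbb{E}_k[\|x_{k+1} - x_k\|^2]$ at every iteration, then for every $k \ge 1$: $\mathbb{E}[\phi(x_k) - \phi^*] \le \frac{L\|x_0 - x^*\|^2}{2(1-\eta)k}$, where $x^*$ is any minimizer of $\phi$. -/

import Mathlib

open MeasureTheory
open scoped RealInnerProductSpace

set_option linter.unusedVariables false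
set_option linter.unusedSectionVars false

section AuxAnalysis
variable {E : Type*} [NormedAddCommGroup E] [InnerProductSpace ℝ E] [CompleteSpace E]

/-- derivative of `t ↦ f (x + t • v)`. -/
lemma aux_line_deriv {f : E → ℝ} {f' : E → E} (hgrad : ∀ x, HasGradientAt f (f' x) x)
    (x v : E) (t : ℝ) :
    HasDerivAt (fun s : ℝ => f (x + s • v)) ⟪f' (x + t • v), v⟫ t := by
  have hc : HasDerivAt (fun s : ℝ => x + s • v) v t := by
    simpa using (((hasDerivAt_id t).smul_const v).const_add x)
  have hf : HasFDerivAt f (InnerProductSpace.toDual ℝ E (f' (x + t • v))) (x + t • v) :=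
    hgrad (x + t • v)
  have := hf.comp_hasDerivAt t hc
  simpa [InnerProductSpace.toDual_apply_apply, Function.comp_def] using this

lemma aux_convex_grad {f : E → ℝ} {f' : E → E} (hconv : ConvexOn ℝ Set.univ f)
    (hgrad : ∀ x, HasGradientAt f (f' x) x) (x y : E) :
    f x + ⟪f' x, y - x⟫ ≤ f y := by
  set g : ℝ → ℝ := fun s => f (x + s • (y - x)) with hg
  have hd : HasDerivAt g ⟪f' x, y - x⟫ 0 := by
    simpa using aux_line_deriv hgrad x (y - x) 0
  have hslope : ∀ t ∈ Set.Ioc (0:ℝ) 1, slope g 0 t ≤ f y - f x := by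
    intro t ht
    have hcvx := hconv.2 (Set.mem_univ x) (Set.mem_univ y) (by linarith [ht.1, ht.2] : 0 ≤ 1 - t)
      (le_of_lt ht.1) (by ring)
    have hxt : (1 - t) • x + t • y = x + t • (y - x) := by
      rw [smul_sub]; module
    rw [hxt] at hcvx
    rw [slope_def_field]
    have hg0 : g 0 = f x := by simp [hg]
    have hgt : g t ≤ (1 - t) * f x + t * f y := by simpa [hg, smul_eq_mul] using hcvx
    rw [sub_zero, div_le_iff₀ ht.1, hg0]
    nlinarith [ht.1]
  have htend : Filter.Tendsto (slope g 0) (nhdsWithin 0 (Set.Ioi 0)) (nhds ⟪f' x, y - x⟫) := by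
    refine (hasDerivAt_iff_tendsto_slope.1 hd).mono_left (nhdsWithin_mono 0 ?_)
    intro t ht
    exact fun h0 => (ne_of_gt (Set.mem_Ioi.1 ht)) (by simpa using h0)
  have hle : ⟪f' x, y - x⟫ ≤ f y - f x := by
    refine le_of_tendsto htend ?_
    filter_upwards [Ioc_mem_nhdsGT_of_mem (Set.mem_Ico.2 ⟨le_rfl, one_pos⟩)] with t ht
    exact hslope t ht
  linarith

lemma aux_descent {f : E → ℝ} {f' : E → E} {L : ℝ} (hL : 0 < L)
    (hgrad : ∀ x, HasGradientAt f (f' x) x) (hlip : LipschitzWith L.toNNReal f')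
    (x y : E) : f y ≤ f x + ⟪f' x, y - x⟫ + L / 2 * ‖y - x‖ ^ 2 := by
  set v : E := y - x with hv
  set G : ℝ → ℝ := fun t => f (x + t • v) - t * ⟪f' x, v⟫ - L / 2 * t ^ 2 * ‖v‖ ^ 2 with hG
  have hd : ∀ t : ℝ, HasDerivAt G
      (⟪f' (x + t • v), v⟫ - ⟪f' x, v⟫ - L / 2 * (2 * t) * ‖v‖ ^ 2) t := by
    intro t
    have h1 := aux_line_deriv hgrad x v t
    have h2 : HasDerivAt (fun s : ℝ => s * ⟪f' x, v⟫) ⟪f' x, v⟫ t := by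
      simpa using (hasDerivAt_id t).mul_const ⟪f' x, v⟫
    have h3 : HasDerivAt (fun s : ℝ => L / 2 * s ^ 2 * ‖v‖ ^ 2) (L / 2 * (2 * t) * ‖v‖ ^ 2) t := by
      have := ((hasDerivAt_pow 2 t).const_mul (L / 2)).mul_const (‖v‖ ^ 2)
      simpa [mul_comm, mul_assoc, mul_left_comm] using this
    exact (h1.sub h2).sub h3
  have hderiv_nonpos : ∀ t ∈ interior (Set.Icc (0:ℝ) 1), deriv G t ≤ 0 := by
    intro t ht
    rw [interior_Icc] at ht
    rw [(hd t).deriv]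
    have hbound : ⟪f' (x + t • v) - f' x, v⟫ ≤ L * t * ‖v‖ ^ 2 := by
      have h1 : ⟪f' (x + t • v) - f' x, v⟫ ≤ ‖f' (x + t • v) - f' x‖ * ‖v‖ :=
        real_inner_le_norm _ _
      have h2 : ‖f' (x + t • v) - f' x‖ ≤ L * (t * ‖v‖) := by
        have h4 : dist (x + t • v) x = ‖t • v‖ := by rw [dist_eq_norm]; congr 1; abel
        calc ‖f' (x + t • v) - f' x‖ = dist (f' (x + t • v)) (f' x) := (dist_eq_norm _ _).symm
          _ ≤ L.toNNReal * dist (x + t • v) x := hlip.dist_le_mul _ _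
          _ = L * ‖t • v‖ := by rw [h4, Real.coe_toNNReal _ hL.le]
          _ = L * (t * ‖v‖) := by rw [norm_smul, Real.norm_eq_abs, abs_of_pos ht.1]
      nlinarith [norm_nonneg v, mul_nonneg (mul_nonneg hL.le ht.1.le) (norm_nonneg v)]
    have hexp : ⟪f' (x + t • v) - f' x, v⟫ = ⟪f' (x + t • v), v⟫ - ⟪f' x, v⟫ :=
      inner_sub_left _ _ _
    nlinarith [hbound]
  have hanti : AntitoneOn G (Set.Icc 0 1) := by
    refine antitoneOn_of_deriv_nonpos (convex_Icc 0 1) ?_ ?_ hderiv_nonpos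
    · exact fun t _ => (hd t).continuousAt.continuousWithinAt
    · intro t ht
      exact ((hd t).differentiableAt).differentiableWithinAt
  have := hanti (Set.mem_Icc.2 ⟨le_rfl, zero_le_one⟩) (Set.mem_Icc.2 ⟨zero_le_one, le_rfl⟩)
    zero_le_one
  have hG0 : G 0 = f x := by simp [hG]
  have hG1 : G 1 = f y - ⟪f' x, v⟫ - L / 2 * ‖v‖ ^ 2 := by simp [hG, hv]
  rw [hG0, hG1] at this
  linarith

lemma aux_prox {h : E → ℝ} (hconvh : ConvexOn ℝ Set.univ h) {α : ℝ} (hα : 0 < α)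
    (p u : E) (hp : ∀ x, h p + 1 / (2 * α) * ‖p - u‖ ^ 2 ≤ h x + 1 / (2 * α) * ‖x - u‖ ^ 2)
    (z : E) :
    h p + 1 / (2 * α) * ‖p - u‖ ^ 2 + 1 / (2 * α) * ‖z - p‖ ^ 2
      ≤ h z + 1 / (2 * α) * ‖z - u‖ ^ 2 := by
  set c : ℝ := 1 / (2 * α) with hc
  have hcpos : 0 < c := by positivity
  set A : ℝ := h z - h p + 2 * c * ⟪p - u, z - p⟫ with hA
  have key : ∀ t ∈ Set.Ioc (0:ℝ) 1, 0 ≤ A + t * (c * ‖z - p‖ ^ 2) := by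
    intro t ht
    have hstep := hp (p + t • (z - p))
    have hcvx : h (p + t • (z - p)) ≤ (1 - t) * h p + t * h z := by
      have := hconvh.2 (Set.mem_univ p) (Set.mem_univ z)
        (by linarith [ht.1, ht.2] : 0 ≤ 1 - t) ht.1.le (by ring)
      have hxt : (1 - t) • p + t • z = p + t • (z - p) := by rw [smul_sub]; module
      rw [hxt] at this
      simpa [smul_eq_mul] using this
    have hexp : ‖p + t • (z - p) - u‖ ^ 2
        = ‖p - u‖ ^ 2 + 2 * (t * ⟪p - u, z - p⟫) + t ^ 2 * ‖z - p‖ ^ 2 := by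
      have h1 : p + t • (z - p) - u = (p - u) + t • (z - p) := by abel
      rw [h1, norm_add_sq_real, real_inner_smul_right, norm_smul, Real.norm_eq_abs,
        mul_pow, sq_abs]
    rw [hexp] at hstep
    have ht2 : 0 ≤ t * (A + t * (c * ‖z - p‖ ^ 2)) := by
      have : t * (A + t * (c * ‖z - p‖ ^ 2))
          = t * (h z - h p) + c * (2 * (t * ⟪p - u, z - p⟫)) + c * (t ^ 2 * ‖z - p‖ ^ 2) := by
        rw [hA]; ring
      rw [this]
      nlinarith [hstep, hcvx]
    nlinarith [ht.1, ht2]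
  have hA0 : 0 ≤ A := by
    have htend : Filter.Tendsto (fun t : ℝ => A + t * (c * ‖z - p‖ ^ 2))
        (nhdsWithin 0 (Set.Ioi 0)) (nhds A) := by
      have : Filter.Tendsto (fun t : ℝ => A + t * (c * ‖z - p‖ ^ 2)) (nhds 0)
          (nhds (A + 0 * (c * ‖z - p‖ ^ 2))) := by
        exact (continuous_const.add (continuous_id.mul continuous_const)).tendsto 0
      simpa using this.mono_left nhdsWithin_le_nhds
    refine ge_of_tendsto htend ?_
    filter_upwards [Ioc_mem_nhdsGT_of_mem (Set.mem_Ico.2 ⟨le_rfl, one_pos⟩)] with t ht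
    exact key t ht
  have hexp2 : ‖z - u‖ ^ 2 = ‖z - p‖ ^ 2 + 2 * ⟪z - p, p - u⟫ + ‖p - u‖ ^ 2 := by
    have h1 : z - u = (z - p) + (p - u) := by abel
    rw [h1, norm_add_sq_real]
  have hcomm : ⟪z - p, p - u⟫ = ⟪p - u, z - p⟫ := real_inner_comm _ _
  nlinarith [hA0, hexp2]

lemma aux_key {f : E → ℝ} {f' : E → E} {h : E → ℝ} {L η α : ℝ}
    (hL : 0 < L) (hη0 : 0 < η) (hη1 : η < 1) (hα : α = (1 - η) / L)
    (hgrad : ∀ x, HasGradientAt f (f' x) x)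
    (hconvf : ConvexOn ℝ Set.univ f) (hconvh : ConvexOn ℝ Set.univ h)
    (hlip : LipschitzWith L.toNNReal f')
    (xk p g z : E)
    (hstep : ∀ x, h p + 1 / (2 * α) * ‖p - (xk - α • g)‖ ^ 2
      ≤ h x + 1 / (2 * α) * ‖x - (xk - α • g)‖ ^ 2) :
    f p + h p ≤ f z + h z + 1 / (2 * α) * ‖z - xk‖ ^ 2 - 1 / (2 * α) * ‖z - p‖ ^ 2
      + ⟪f' xk - g, p - xk⟫ + ⟪f' xk - g, xk - z⟫
      - η * (1 / (2 * α)) * ‖p - xk‖ ^ 2 := by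
  have hαpos : 0 < α := by rw [hα]; exact div_pos (by linarith) hL
  have hαne : α ≠ 0 := ne_of_gt hαpos
  have d1 := aux_descent hL hgrad hlip xk p
  have d2 := aux_convex_grad hconvf hgrad xk z
  have d3 := aux_prox hconvh hαpos p (xk - α • g) hstep z
  have expand : ∀ w : E, ‖w - (xk - α • g)‖ ^ 2
      = ‖w - xk‖ ^ 2 + 2 * (α * ⟪w - xk, g⟫) + α ^ 2 * ‖g‖ ^ 2 := by
    intro w
    have h1 : w - (xk - α • g) = (w - xk) + α • g := by abel
    rw [h1, norm_add_sq_real, real_inner_smul_right, norm_smul, Real.norm_eq_abs,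
      mul_pow, sq_abs]
  have e1c : 1 / (2 * α) * ‖z - (xk - α • g)‖ ^ 2
      = 1 / (2 * α) * ‖z - xk‖ ^ 2 + ⟪z - xk, g⟫ + 1 / (2 * α) * (α ^ 2 * ‖g‖ ^ 2) := by
    rw [expand z]; field_simp
  have e2c : 1 / (2 * α) * ‖p - (xk - α • g)‖ ^ 2
      = 1 / (2 * α) * ‖p - xk‖ ^ 2 + ⟪p - xk, g⟫ + 1 / (2 * α) * (α ^ 2 * ‖g‖ ^ 2) := by
    rw [expand p]; field_simp
  have hLc : L / 2 * ‖p - xk‖ ^ 2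
      = 1 / (2 * α) * ‖p - xk‖ ^ 2 - η * (1 / (2 * α)) * ‖p - xk‖ ^ 2 := by
    rw [hα]
    have : (1:ℝ) - η ≠ 0 := by linarith
    field_simp
  have i1 : ⟪f' xk - g, p - xk⟫ = ⟪f' xk, p - xk⟫ - ⟪p - xk, g⟫ := by
    rw [inner_sub_left, real_inner_comm g (p - xk)]
  have i2 : ⟪f' xk - g, xk - z⟫ = -⟪f' xk, z - xk⟫ + ⟪z - xk, g⟫ := by
    rw [inner_sub_left, ← neg_sub z xk, inner_neg_right, inner_neg_right,
      real_inner_comm g (z - xk)]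
    ring
  rw [i1, i2]
  linarith [d1, d2, d3, e1c, e2c, hLc]

end AuxAnalysis

lemma aux_condexp_clm {Ω : Type*} {m m0 : MeasurableSpace Ω} (hm : m ≤ m0)
    (μ : @Measure Ω m0) [IsFiniteMeasure μ]
    {E F : Type*} [NormedAddCommGroup E] [NormedSpace ℝ E] [CompleteSpace E]
    [NormedAddCommGroup F] [NormedSpace ℝ F] [CompleteSpace F]
    (T : E →L[ℝ] F) {g : Ω → E} (hg : Integrable g μ) :
    (fun ω => T ((μ[g|m]) ω)) =ᵐ[μ] μ[fun ω => T (g ω)|m] := by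
  refine ae_eq_condExp_of_forall_setIntegral_eq hm (T.integrable_comp hg)
    (fun s _ _ => (T.integrable_comp integrable_condExp).integrableOn)
    (fun s hs hμs => ?_) ?_
  · rw [T.integral_comp_comm integrable_condExp.integrableOn,
      setIntegral_condExp hm hg hs, T.integral_comp_comm hg.integrableOn]
  · exact StronglyMeasurable.aestronglyMeasurable
      (T.continuous.comp_stronglyMeasurable stronglyMeasurable_condExp)

lemma aux_integrable_inner {Ω : Type*} [MeasurableSpace Ω] {μ : Measure Ω}
    {E : Type*} [NormedAddCommGroup E] [InnerProductSpace ℝ E]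
    {V W : Ω → E} (hV : MemLp V 2 μ) (hW : MemLp W 2 μ) :
    Integrable (fun ω => ⟪V ω, W ω⟫) μ := by
  have := L2.integrable_inner (𝕜 := ℝ) (hV.toLp V) (hW.toLp W)
  refine this.congr ?_
  filter_upwards [hV.coeFn_toLp, hW.coeFn_toLp] with ω h1 h2
  rw [h1, h2]

lemma aux_inner_zero {Ω : Type*} {m m0 : MeasurableSpace Ω} (hm : m ≤ m0)
    (μ : @Measure Ω m0) [IsProbabilityMeasure μ] {n : ℕ}
    {V W : Ω → EuclideanSpace ℝ (Fin n)}
    (hVm : StronglyMeasurable[m] V) (hV : MemLp V 2 μ) (hW : MemLp W 2 μ)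
    (hW0 : μ[W|m] =ᵐ[μ] 0) :
    ∫ ω, ⟪V ω, W ω⟫ ∂μ = 0 := by
  have hWi : Integrable W μ := hW.integrable one_le_two
  have hsum : ∀ ω, ⟪V ω, W ω⟫ = ∑ i : Fin n, V ω i * W ω i := by
    intro ω
    simp [PiLp.inner_apply, RCLike.inner_apply, mul_comm]
  rw [integral_congr_ae (Filter.EventuallyEq.of_eq (funext hsum))]
  have hVi2 : ∀ i : Fin n, MemLp (fun ω => V ω i) 2 μ :=
    fun i => (EuclideanSpace.proj i : EuclideanSpace ℝ (Fin n) →L[ℝ] ℝ).comp_memLp' hV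
  have hWi2 : ∀ i : Fin n, MemLp (fun ω => W ω i) 2 μ :=
    fun i => (EuclideanSpace.proj i : EuclideanSpace ℝ (Fin n) →L[ℝ] ℝ).comp_memLp' hW
  have hprod : ∀ i : Fin n, Integrable (fun ω => V ω i * W ω i) μ := by
    intro i
    have := aux_integrable_inner (E := ℝ) (hVi2 i) (hWi2 i)
    simpa [RCLike.inner_apply, mul_comm] using this
  rw [integral_finset_sum _ (fun i _ => hprod i)]
  refine Finset.sum_eq_zero fun i _ => ?_
  -- conditional expectation of the i-th coordinate of W is 0
  have hWcoord : μ[fun ω => W ω i|m] =ᵐ[μ] 0 := by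
    have h1 := aux_condexp_clm hm μ
      (EuclideanSpace.proj i : EuclideanSpace ℝ (Fin n) →L[ℝ] ℝ) hWi
    refine h1.symm.trans ?_
    filter_upwards [hW0] with ω hω
    simp [hω]
  have hVim : StronglyMeasurable[m] (fun ω => V ω i) :=
    (EuclideanSpace.proj i :
      EuclideanSpace ℝ (Fin n) →L[ℝ] ℝ).continuous.comp_stronglyMeasurable hVm
  have hpull := condExp_mul_of_stronglyMeasurable_left (μ := μ) (m := m) hVim
    (by simpa [Pi.mul_def] using hprod i) ((hWi2 i).integrable one_le_two)
  calc ∫ ω, V ω i * W ω i ∂μ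
      = ∫ ω, (μ[(fun ω => V ω i) * (fun ω => W ω i)|m]) ω ∂μ := by
        rw [integral_condExp hm]; simp [Pi.mul_def]
    _ = 0 := by
        rw [integral_congr_ae (hpull.trans ?_), integral_zero]
        filter_upwards [hWcoord] with ω hω
        simp [hω]

/-- Theorem 3.3 of the paper: sublinear rate `𝔼[φ(xₖ) - φ*] ≤ L‖x₀-x*‖²/(2(1-η)k)`
for the stochastic proximal gradient method with constant step `α = (1-η)/L`
on a convex composite problem, under the fundamental condition at every
iteration. -/
theorem stmt_7 {n : ℕ} {Ω : Type*} [MeasurableSpace Ω] (P : Measure Ω)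
    [IsProbabilityMeasure P]
    -- the filtration `𝕋ₖ` generated by `x₀, g₀, …, g_{k-1}`:
    (m : ℕ → MeasurableSpace Ω) (hm : ∀ k, m k ≤ ‹MeasurableSpace Ω›)
    (hmono : Monotone m)
    (f : EuclideanSpace ℝ (Fin n) → ℝ)
    (f' : EuclideanSpace ℝ (Fin n) → EuclideanSpace ℝ (Fin n))
    (h : EuclideanSpace ℝ (Fin n) → ℝ)
    (L η α : ℝ) (hL : 0 < L) (hη0 : 0 < η) (hη1 : η < 1)
    (hα : α = (1 - η) / L)
    (hgrad : ∀ x, HasGradientAt f (f' x) x)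
    (hconvf : ConvexOn ℝ Set.univ f)
    (hconvh : ConvexOn ℝ Set.univ h) (hlsch : LowerSemicontinuous h)
    (hlip : LipschitzWith L.toNNReal f')
    -- `x*` minimizes `φ = f + h`:
    (xs : EuclideanSpace ℝ (Fin n)) (hmin : ∀ x, f xs + h xs ≤ f x + h x)
    (X G : ℕ → Ω → EuclideanSpace ℝ (Fin n))
    (x0 : EuclideanSpace ℝ (Fin n)) (hX0 : X 0 = fun _ => x0)
    -- adaptedness and measurability:
    (hadapted : ∀ k, StronglyMeasurable[m k] (X k))
    (hGmeas : ∀ k, StronglyMeasurable[m (k + 1)] (G k))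
    -- `x_{k+1} = prox_{α h}(xₖ - α gₖ)`:
    (hstep : ∀ k, ∀ ω, ∀ x,
      h (X (k + 1) ω) + 1 / (2 * α) * ‖X (k + 1) ω - (X k ω - α • G k ω)‖ ^ 2
        ≤ h x + 1 / (2 * α) * ‖x - (X k ω - α • G k ω)‖ ^ 2)
    -- unbiasedness `𝔼ₖ[gₖ] = ∇f(xₖ)`:
    (hunbiased : ∀ k, P[G k|m k] =ᵐ[P] fun ω => f' (X k ω))
    -- integrability:
    (hX2 : ∀ k, MemLp (X k) 2 P) (hG2 : ∀ k, MemLp (G k) 2 P)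
    (hint1 : ∀ k, Integrable (fun ω => f (X k ω) + h (X k ω)) P)
    (hint2 : ∀ k, Integrable
      (fun ω => ⟪f' (X k ω) - G k ω, X (k + 1) ω - X k ω⟫) P)
    -- the fundamental condition (2.8) at every iteration:
    (hfund : ∀ k, ∀ᵐ ω ∂P,
      α * (P[fun ω => ⟪f' (X k ω) - G k ω, X (k + 1) ω - X k ω⟫|m k]) ω
        ≤ η / 2 * (P[fun ω => ‖X (k + 1) ω - X k ω‖ ^ 2|m k]) ω) :
    ∀ k : ℕ, 1 ≤ k →
      (∫ ω, (f (X k ω) + h (X k ω)) ∂P) - (f xs + h xs)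
        ≤ L * ‖x0 - xs‖ ^ 2 / (2 * (1 - η) * k) := by
  have hαpos : 0 < α := by rw [hα]; exact div_pos (by linarith) hL
  set c : ℝ := 1 / (2 * α) with hc
  have hcpos : 0 < c := by positivity
  -- ℒ² facts
  have hΔ2 : ∀ k, MemLp (fun ω => X (k + 1) ω - X k ω) 2 P :=
    fun k => (hX2 (k + 1)).sub (hX2 k)
  have hXxs2 : ∀ k, MemLp (fun ω => X k ω - xs) 2 P :=
    fun k => (hX2 k).sub (memLp_const xs)
  have hf'2 : ∀ k, MemLp (fun ω => f' (X k ω)) 2 P := by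
    intro k
    have hlip0 : LipschitzWith L.toNNReal (fun v => f' v - f' 0) := by
      apply LipschitzWith.of_dist_le_mul
      intro a b
      simpa [dist_sub_right] using hlip.dist_le_mul a b
    have h0 : MemLp ((fun v => f' v - f' 0) ∘ X k) 2 P :=
      hlip0.comp_memLp (by simp) (hX2 k)
    have h1 := h0.add (memLp_const (f' 0))
    have heq : ((fun v => f' v - f' 0) ∘ X k + fun _ => f' 0) = fun ω => f' (X k ω) := by
      funext ω; simp [Function.comp]
    rwa [heq] at h1
  have hδ2 : ∀ k, MemLp (fun ω => f' (X k ω) - G k ω) 2 P :=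
    fun k => (hf'2 k).sub (hG2 k)
  -- integrability facts
  have hI2int : ∀ k, Integrable (fun ω => ‖X (k + 1) ω - X k ω‖ ^ 2) P := by
    intro k
    have h1 := aux_integrable_inner (hΔ2 k) (hΔ2 k)
    simp only [real_inner_self_eq_norm_sq] at h1
    exact h1
  have hDint : ∀ k, Integrable (fun ω => ‖xs - X k ω‖ ^ 2) P := by
    intro k
    have h2 : MemLp (fun ω => xs - X k ω) 2 P := (memLp_const xs).sub (hX2 k)
    have h1 := aux_integrable_inner h2 h2
    simp only [real_inner_self_eq_norm_sq] at h1
    exact h1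
  have hI3int : ∀ k, Integrable (fun ω => ⟪f' (X k ω) - G k ω, X k ω - xs⟫) P :=
    fun k => aux_integrable_inner (hδ2 k) (hXxs2 k)
  -- zero-mean fact
  have hzero : ∀ k, ∫ ω, ⟪f' (X k ω) - G k ω, X k ω - xs⟫ ∂P = 0 := by
    intro k
    have hW0 : P[fun ω => f' (X k ω) - G k ω|m k] =ᵐ[P] 0 := by
      have ha : Integrable (fun ω => f' (X k ω)) P := (hf'2 k).integrable one_le_two
      have hb : Integrable (G k) P := (hG2 k).integrable one_le_two
      have hsub := condExp_sub (m := m k) (μ := P) ha hb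
      have hfix : P[fun ω => f' (X k ω)|m k]
          = fun ω => f' (X k ω) :=
        condExp_of_stronglyMeasurable (hm k)
          (hlip.continuous.comp_stronglyMeasurable (hadapted k)) ha
      have : P[(fun ω => f' (X k ω)) - G k|m k] =ᵐ[P] 0 := by
        refine hsub.trans ?_
        rw [hfix]
        filter_upwards [hunbiased k] with ω hω
        simp [hω]
      refine (Filter.EventuallyEq.refl _ _).trans ?_
      simpa [Pi.sub_def] using this
    have hVm : StronglyMeasurable[m k] (fun ω => X k ω - xs) :=
      (hadapted k).sub stronglyMeasurable_const
    have hz := aux_inner_zero (hm k) P hVm (hXxs2 k) (hδ2 k) hW0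
    rw [← hz]
    exact integral_congr_ae (Filter.EventuallyEq.of_eq
      (funext fun ω => real_inner_comm _ _))
  -- integrated fundamental condition
  have hfundint : ∀ k, ∫ ω, ⟪f' (X k ω) - G k ω, X (k + 1) ω - X k ω⟫ ∂P
      ≤ η * c * ∫ ω, ‖X (k + 1) ω - X k ω‖ ^ 2 ∂P := by
    intro k
    have hmono' := integral_mono_ae
      (integrable_condExp.const_mul α)
      (integrable_condExp.const_mul (η / 2)) (hfund k)
    rw [integral_const_mul, integral_const_mul, integral_condExp (hm k),
      integral_condExp (hm k)] at hmono'
    have h2α : (0:ℝ) < 2 * α := by linarith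
    rw [hc]
    rw [show η * (1 / (2 * α)) * ∫ ω, ‖X (k + 1) ω - X k ω‖ ^ 2 ∂P
      = (η * ∫ ω, ‖X (k + 1) ω - X k ω‖ ^ 2 ∂P) / (2 * α) by ring,
      le_div_iff₀ h2α]
    linarith
  -- pointwise key inequality, integrated with z = xs (claim A)
  have claimA : ∀ k, (∫ ω, (f (X (k + 1) ω) + h (X (k + 1) ω)) ∂P) - (f xs + h xs)
      ≤ c * (∫ ω, ‖xs - X k ω‖ ^ 2 ∂P) - c * (∫ ω, ‖xs - X (k + 1) ω‖ ^ 2 ∂P) := by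
    intro k
    have keyk : ∀ ω, f (X (k + 1) ω) + h (X (k + 1) ω)
        ≤ (f xs + h xs) + (c * ‖xs - X k ω‖ ^ 2 - c * ‖xs - X (k + 1) ω‖ ^ 2
          + (⟪f' (X k ω) - G k ω, X (k + 1) ω - X k ω⟫
            + (⟪f' (X k ω) - G k ω, X k ω - xs⟫
              - η * c * ‖X (k + 1) ω - X k ω‖ ^ 2))) := by
      intro ω
      have := aux_key hL hη0 hη1 hα hgrad hconvf hconvh hlip
        (X k ω) (X (k + 1) ω) (G k ω) xs (hstep k ω)
      rw [hc]; linarith [this]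
    have int5 : Integrable (fun ω => ⟪f' (X k ω) - G k ω, X k ω - xs⟫
        - η * c * ‖X (k + 1) ω - X k ω‖ ^ 2) P :=
      (hI3int k).sub ((hI2int k).const_mul _)
    have int4 : Integrable (fun ω => ⟪f' (X k ω) - G k ω, X (k + 1) ω - X k ω⟫
        + (⟪f' (X k ω) - G k ω, X k ω - xs⟫
          - η * c * ‖X (k + 1) ω - X k ω‖ ^ 2)) P := (hint2 k).add int5
    have int3 : Integrable (fun ω => c * ‖xs - X k ω‖ ^ 2
        - c * ‖xs - X (k + 1) ω‖ ^ 2) P :=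
      ((hDint k).const_mul c).sub ((hDint (k + 1)).const_mul c)
    have int2 : Integrable (fun ω => c * ‖xs - X k ω‖ ^ 2
        - c * ‖xs - X (k + 1) ω‖ ^ 2
        + (⟪f' (X k ω) - G k ω, X (k + 1) ω - X k ω⟫
          + (⟪f' (X k ω) - G k ω, X k ω - xs⟫
            - η * c * ‖X (k + 1) ω - X k ω‖ ^ 2))) P := int3.add int4
    have hmono' := integral_mono (hint1 (k + 1)) ((integrable_const _).add int2) keyk
    simp only [Pi.add_apply] at hmono'
    rw [integral_add (integrable_const _) int2, integral_const,
      integral_add int3 int4, integral_sub ((hDint k).const_mul c)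
        ((hDint (k + 1)).const_mul c),
      integral_add (hint2 k) int5,
      integral_sub (hI3int k) ((hI2int k).const_mul _),
      integral_const_mul, integral_const_mul, integral_const_mul,
      hzero k] at hmono'
    simp only [measure_univ, probReal_univ, ENNReal.toReal_one, smul_eq_mul, one_mul] at hmono'
    have := hfundint k
    linarith
  -- claim B : expected objective values are nonincreasing
  have claimB : ∀ k, (∫ ω, (f (X (k + 1) ω) + h (X (k + 1) ω)) ∂P)
      ≤ ∫ ω, (f (X k ω) + h (X k ω)) ∂P := by
    intro k
    have keyk : ∀ ω, f (X (k + 1) ω) + h (X (k + 1) ω)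
        ≤ (f (X k ω) + h (X k ω))
          + (⟪f' (X k ω) - G k ω, X (k + 1) ω - X k ω⟫
            - (1 + η) * c * ‖X (k + 1) ω - X k ω‖ ^ 2) := by
      intro ω
      have hkey := aux_key hL hη0 hη1 hα hgrad hconvf hconvh hlip
        (X k ω) (X (k + 1) ω) (G k ω) (X k ω) (hstep k ω)
      simp only [sub_self, norm_zero, inner_zero_right] at hkey
      rw [norm_sub_rev (X k ω) (X (k + 1) ω)] at hkey
      rw [hc]; linarith [hkey]
    have int5 : Integrable (fun ω => ⟪f' (X k ω) - G k ω, X (k + 1) ω - X k ω⟫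
        - (1 + η) * c * ‖X (k + 1) ω - X k ω‖ ^ 2) P :=
      (hint2 k).sub ((hI2int k).const_mul _)
    have hmono' := integral_mono (hint1 (k + 1)) ((hint1 k).add int5) keyk
    simp only [Pi.add_apply] at hmono'
    rw [integral_add (hint1 k) int5,
      integral_sub (hint2 k) ((hI2int k).const_mul _), integral_const_mul] at hmono'
    have h1 := hfundint k
    have h2 : 0 ≤ ∫ ω, ‖X (k + 1) ω - X k ω‖ ^ 2 ∂P :=
      integral_nonneg fun ω => by positivity
    nlinarith [hcpos]
  -- telescoping by induction
  have main : ∀ k : ℕ, (k : ℝ) * ((∫ ω, (f (X k ω) + h (X k ω)) ∂P) - (f xs + h xs))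
      + c * (∫ ω, ‖xs - X k ω‖ ^ 2 ∂P) ≤ c * (∫ ω, ‖xs - X 0 ω‖ ^ 2 ∂P) := by
    intro k
    induction k with
    | zero => simp
    | succ k ih =>
      have hA := claimA k
      have hB := claimB k
      have hk0 : (0:ℝ) ≤ (k : ℝ) := Nat.cast_nonneg k
      push_cast
      nlinarith [hA, hB, ih, hk0]
  intro k hk
  have hkpos : (0:ℝ) < (k : ℝ) := by exact_mod_cast Nat.pos_of_ne_zero (by omega)
  have hD0 : (∫ ω, ‖xs - X 0 ω‖ ^ 2 ∂P) = ‖xs - x0‖ ^ 2 := by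
    rw [hX0]; simp [measure_univ]
  have hDk : 0 ≤ ∫ ω, ‖xs - X k ω‖ ^ 2 ∂P := integral_nonneg fun ω => by positivity
  have hmain := main k
  rw [hD0] at hmain
  have hgoal : L * ‖x0 - xs‖ ^ 2 / (2 * (1 - η) * k) = c * ‖xs - x0‖ ^ 2 / k := by
    rw [hc, hα, norm_sub_rev x0 xs]
    have h1 : (1:ℝ) - η ≠ 0 := by linarith
    field_simp
    try ring
  rw [hgoal, le_div_iff₀ hkpos]
  nlinarith [hmain, hDk, hcpos]
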